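/- Simplex interpolation is well-defined on simplex boundaries: if x ∈ [0,1]^D admits two sorting permutations π and σ (both making the coordinates of x nonincreasing), then the simplex interpolation values computed with π and σ agree: ∑_k ψ_k^π(x) θ(u_k^π) = ∑_k ψ_k^σ(x) θ(u_k^σ) for any θ : {0,1}^D → ℝ. -/

import Mathlib

/-- Sorted coordinate sequence with sentinels: `sSeq D x π 0 = 1`,
`sSeq D x π k = x (π (k-1))` for `1 ≤ k ≤ D`, and `0` for `k > D`. -/
def sSeq (D : ℕ) (x : Fin D → ℝ) (π : Equiv.Perm (Fin D)) (k : ℕ) : ℝ :=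
  if h : 1 ≤ k ∧ k ≤ D then x (π ⟨k - 1, by omega⟩) else if k = 0 then 1 else 0

/-- The `k`-th vertex of the simplex associated with sorting permutation `π`. -/
def simplexVertex (D : ℕ) (π : Equiv.Perm (Fin D)) (k : ℕ) : Fin D → Bool :=
  fun i => decide ((π.symm i : ℕ) < k)

lemma sSeq_succ_le (D : ℕ) (x : Fin D → ℝ) (hx : ∀ i, x i ∈ Set.Icc (0:ℝ) 1)
    (π : Equiv.Perm (Fin D)) (hπ : ∀ i j : Fin D, i ≤ j → x (π j) ≤ x (π i))
    (k : ℕ) : sSeq D x π (k + 1) ≤ sSeq D x π k := by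
  unfold sSeq
  by_cases h1 : 1 ≤ k ∧ k ≤ D
  · rw [dif_pos h1]
    by_cases h2 : 1 ≤ k + 1 ∧ k + 1 ≤ D
    · rw [dif_pos h2]
      exact hπ ⟨k - 1, by omega⟩ ⟨k + 1 - 1, by omega⟩ (by simp [Fin.le_def])
    · rw [dif_neg h2, if_neg (by omega)]
      exact (hx _).1
  · rw [dif_neg h1]
    by_cases hk : k = 0
    · subst hk
      rw [if_pos rfl]
      by_cases h2 : 1 ≤ 0 + 1 ∧ 0 + 1 ≤ D
      · rw [dif_pos h2]; exact (hx _).2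
      · rw [dif_neg h2, if_neg (by omega)]; exact zero_le_one
    · rw [if_neg hk, dif_neg (by omega), if_neg (by omega)]

lemma vertex_eq (D : ℕ) (x : Fin D → ℝ)
    (π : Equiv.Perm (Fin D)) (hπ : ∀ i j : Fin D, i ≤ j → x (π j) ≤ x (π i))
    (k : ℕ) (hk : k ≤ D)
    (h : sSeq D x π (k + 1) < sSeq D x π k) :
    simplexVertex D π k = fun i => decide (sSeq D x π (k + 1) < x i) := by
  funext i
  simp only [simplexVertex, decide_eq_decide]
  have hxi : x (π (π.symm i)) = x i := by rw [Equiv.apply_symm_apply]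
  constructor
  · intro hjk
    have hk1 : 1 ≤ k := by omega
    have hsk : sSeq D x π k = x (π ⟨k - 1, by omega⟩) := dif_pos ⟨hk1, hk⟩
    have hle : x (π ⟨k - 1, by omega⟩) ≤ x (π (π.symm i)) := by
      exact hπ (π.symm i) ⟨k - 1, by omega⟩ (by simp [Fin.le_def]; omega)
    rw [hxi] at hle
    calc sSeq D x π (k + 1) < sSeq D x π k := h
      _ = x (π ⟨k - 1, by omega⟩) := hsk
      _ ≤ x i := hle
  · intro hlt
    by_contra hjk
    push_neg at hjk
    have hkD : k < D := lt_of_le_of_lt hjk (π.symm i).isLt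
    have hsk1 : sSeq D x π (k + 1) = x (π ⟨k, hkD⟩) := dif_pos ⟨by omega, by omega⟩
    have hle : x (π (π.symm i)) ≤ x (π ⟨k, hkD⟩) := by
      exact hπ ⟨k, hkD⟩ (π.symm i) (by simp [Fin.le_def]; omega)
    rw [hxi] at hle
    rw [hsk1] at hlt
    exact absurd hle (not_le.mpr hlt)

theorem stmt_16 (D : ℕ) (x : Fin D → ℝ) (hx : ∀ i, x i ∈ Set.Icc (0:ℝ) 1)
    (π σ : Equiv.Perm (Fin D))
    (hπ : ∀ i j : Fin D, i ≤ j → x (π j) ≤ x (π i))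
    (hσ : ∀ i j : Fin D, i ≤ j → x (σ j) ≤ x (σ i))
    (θ : (Fin D → Bool) → ℝ) :
    ∑ k ∈ Finset.range (D + 1),
        (sSeq D x π k - sSeq D x π (k + 1)) * θ (simplexVertex D π k)
      = ∑ k ∈ Finset.range (D + 1),
        (sSeq D x σ k - sSeq D x σ (k + 1)) * θ (simplexVertex D σ k) := by
  -- the sorted sequences agree
  have hmono : ∀ (τ : Equiv.Perm (Fin D)),
      (∀ i j : Fin D, i ≤ j → x (τ j) ≤ x (τ i)) →
      Monotone ((fun i => -x i) ∘ τ) := by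
    intro τ hτ i j hij
    simp only [Function.comp_apply, neg_le_neg_iff]
    exact hτ i j hij
  have hcomp : (fun i => -x i) ∘ π = (fun i => -x i) ∘ σ :=
    Tuple.unique_monotone (hmono π hπ) (hmono σ hσ)
  have hxeq : ∀ i : Fin D, x (π i) = x (σ i) := by
    intro i
    have := congrFun hcomp i
    simp only [Function.comp_apply, neg_inj] at this
    exact this
  have hs : sSeq D x π = sSeq D x σ := by
    funext k
    unfold sSeq
    by_cases h1 : 1 ≤ k ∧ k ≤ D
    · rw [dif_pos h1, dif_pos h1, hxeq]
    · rw [dif_neg h1, dif_neg h1]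
  have key : ∀ (τ : Equiv.Perm (Fin D)),
      (∀ i j : Fin D, i ≤ j → x (τ j) ≤ x (τ i)) →
      ∑ k ∈ Finset.range (D + 1),
        (sSeq D x τ k - sSeq D x τ (k + 1)) * θ (simplexVertex D τ k)
      = ∑ k ∈ Finset.range (D + 1),
        (sSeq D x τ k - sSeq D x τ (k + 1)) *
          θ (fun i => decide (sSeq D x τ (k + 1) < x i)) := by
    intro τ hτ
    refine Finset.sum_congr rfl ?_
    intro k hk
    rcases eq_or_lt_of_le (sSeq_succ_le D x hx τ hτ k) with he | hlt
    · rw [← he, sub_self, zero_mul, zero_mul]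
    · rw [vertex_eq D x τ hτ k (by simpa using Finset.mem_range.mp hk |> Nat.lt_succ_iff.mp) hlt]
  rw [key π hπ, key σ hσ, hs]
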